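/- Let G be a connected Lie group. Every affine vector field F on G can be written uniquely as a sum F = X + Z, where X is a linear vector field on G and Z is a left-invariant vector field on G. -/

import Mathlib

open scoped Manifold
open Set Function

noncomputable section

variable {E : Type*} [NormedAddCommGroup E] [NormedSpace ℝ E]
  {H : Type*} [TopologicalSpace H] (I : ModelWithCorners ℝ E H)
  {M : Type*} [TopologicalSpace M] [ChartedSpace H M] [IsManifold I (⊤ : ℕ∞) M]

/-- The expression of a vector field in the preferred chart at `x`. -/
def chartVF (x : M) (V : ∀ y : M, TangentSpace I y) (v : E) : E :=
  mfderiv I 𝓘(ℝ, E) (extChartAt I x) ((extChartAt I x).symm v) (V ((extChartAt I x).symm v))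

/-- The Lie bracket of two vector fields on a manifold, computed in the preferred chart
at the point `x`. -/
def mbracket (V W : ∀ y : M, TangentSpace I y) (x : M) : TangentSpace I x :=
  mfderiv 𝓘(ℝ, E) I (extChartAt I x).symm (extChartAt I x x)
    (show E from VectorField.lieBracketWithin ℝ (chartVF I x V) (chartVF I x W) (Set.range I)
      (extChartAt I x x))

/-- A vector field is `C^k` if it is `C^k` as a section of the tangent bundle. -/
def CkVF (k : ℕ∞) (V : ∀ y : M, TangentSpace I y) : Prop :=
  ContMDiff I I.tangent k (fun x => (⟨x, V x⟩ : TangentBundle I M))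

/-- A vector field is smooth if it is smooth as a section of the tangent bundle. -/
def SmoothVF (V : ∀ y : M, TangentSpace I y) : Prop := CkVF I ⊤ V

/-- A vector field is complete if it admits a global integral curve through every point. -/
def IsCompleteVF (V : ∀ y : M, TangentSpace I y) : Prop :=
  ∀ x : M, ∃ γ : ℝ → M, γ 0 = x ∧ IsMIntegralCurve γ V

/-- `φ` is a global flow of the vector field `V`. -/
def IsFlowOf (φ : ℝ → M → M) (V : ∀ y : M, TangentSpace I y) : Prop :=
  (∀ x, φ 0 x = x) ∧ (∀ s t x, φ (s + t) x = φ s (φ t x)) ∧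
    ∀ x, IsMIntegralCurve (fun t => φ t x) V

section AuxGeneral

open VectorField

/-- `mfderiv` into a vector space, as a `fderivWithin` in the preferred chart. -/
theorem mfderiv_eq_fderivWithin_chart {f : M → E} {y : M}
    (h : MDifferentiableAt I 𝓘(ℝ, E) f y) :
    mfderiv I 𝓘(ℝ, E) f y =
      fderivWithin ℝ (f ∘ (extChartAt I y).symm) (range I) (extChartAt I y y) := by
  simp only [mfderiv, if_pos h, writtenInExtChartAt, extChartAt_model_space_eq_id,
    PartialEquiv.refl_coe]
  exact if_pos h

/-- The expression of a vector field in a chart coincides with the trivialization of the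
tangent bundle. -/
theorem chartVF_eq_triv (V : ∀ y : M, TangentSpace I y) (x : M) {v : E}
    (hv : v ∈ (extChartAt I x).target) :
    chartVF I x V v =
      (trivializationAt E (TangentSpace I) x
        ⟨(extChartAt I x).symm v, V ((extChartAt I x).symm v)⟩).2 := by
  have hy : (extChartAt I x).symm v ∈ (chartAt H x).source := by
    rw [← extChartAt_source I]
    exact (extChartAt I x).map_target hv
  rw [chartVF, mfderiv_eq_fderivWithin_chart I (mdifferentiableAt_extChartAt hy)]
  rfl

/-- A smooth vector field has a differentiable expression in charts. -/
theorem CkVF.contDiffWithinAt_chartVF {V : ∀ y : M, TangentSpace I y}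
    (hV : CkVF I ⊤ V) (x : M) :
    ContDiffWithinAt ℝ (⊤ : ℕ∞) (chartVF I x V) (range I) (extChartAt I x x) := by
  have h1 : ContMDiffAt I 𝓘(ℝ, E) (⊤ : ℕ∞)
      (fun y => (trivializationAt E (TangentSpace I) x ⟨y, V y⟩).2) x :=
    (Bundle.contMDiffAt_section (E := TangentSpace I) (s := V) x).1 (hV x)
  rw [contMDiffAt_iff] at h1
  have h2 := h1.2
  simp only [extChartAt_model_space_eq_id, PartialEquiv.refl_coe, id_eq] at h2
  apply ContDiffWithinAt.congr_of_eventuallyEq h2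
  · filter_upwards [extChartAt_target_mem_nhdsWithin x] with v hv
    exact chartVF_eq_triv I V x hv
  · exact chartVF_eq_triv I V x (mem_extChartAt_target x)

/-- Difference of smooth vector fields is smooth. -/
theorem CkVF.sub {V W : ∀ y : M, TangentSpace I y} {n : ℕ∞}
    (hV : CkVF I n V) (hW : CkVF I n W) : CkVF I n (fun y => V y - W y) := by
  let s : ContMDiffSection I E n (TangentSpace I : M → Type _) := ⟨V, hV⟩
  let t : ContMDiffSection I E n (TangentSpace I : M → Type _) := ⟨W, hW⟩
  exact (s - t).contMDiff

end AuxGeneral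

section LieGroupDefs

variable {G : Type*} [TopologicalSpace G] [ChartedSpace H G] [Group G] [LieGroup I (⊤ : ℕ∞) G]

/-- A vector field on a Lie group is right invariant if it commutes with all right
translations. -/
def RightInvariant (Y : ∀ y : G, TangentSpace I y) : Prop :=
  ∀ x y : G, mfderiv I I (fun z => z * x) y (Y y) = Y (y * x)

/-- A vector field on a Lie group is left invariant if it commutes with all left
translations. -/
def LeftInvariant (Z : ∀ y : G, TangentSpace I y) : Prop :=
  ∀ x y : G, mfderiv I I (fun z => x * z) y (Z y) = Z (x * y)

/-- A vector field `F` on a Lie group is affine if it is smooth and its Lie bracket with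
any right invariant vector field is right invariant. -/
def IsAffineVF (F : ∀ y : G, TangentSpace I y) : Prop :=
  SmoothVF I F ∧ ∀ Y : ∀ y : G, TangentSpace I y,
    RightInvariant I Y → RightInvariant I (mbracket I F Y)

/-- A vector field on a Lie group is linear if it is affine and vanishes at the identity. -/
def IsLinearVF (F : ∀ y : G, TangentSpace I y) : Prop :=
  IsAffineVF I F ∧ F 1 = 0

section GroupAux

open VectorField

variable {G : Type*} [TopologicalSpace G] [ChartedSpace H G] [Group G] [LieGroup I (⊤ : ℕ∞) G]

/-- Extension of a tangent vector at the identity to a left invariant vector field. -/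
def leftInvVF (v : E) : ∀ y : G, TangentSpace I y :=
  fun x => mfderiv I I (fun z => x * z) 1 v

theorem leftInvariant_leftInvVF (v : E) : LeftInvariant I (G := G) (leftInvVF I v) := by
  intro x y
  show mfderiv I I (fun z => x * z) y (mfderiv I I (fun z => y * z) 1 v)
      = mfderiv I I (fun z => (x * y) * z) 1 v
  have hcomp : (fun z => (x * y) * z) = (fun z => x * z) ∘ (fun z => y * z) :=
    funext fun z => by simp [mul_assoc]
  have hstep := mfderiv_comp_apply_of_eq (I := I) (I' := I) (I'' := I)
    (g := fun z => x * z) (f := fun z => y * z) (x := (1 : G)) (y := y)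
    mdifferentiableAt_mul_left mdifferentiableAt_mul_left (by simp) v
  rw [hcomp]
  exact hstep.symm

theorem leftInvVF_one (v : E) : leftInvVF I v (1 : G) = v := by
  have h : (fun z => (1 : G) * z) = id := by funext z; simp
  show mfderiv I I (fun z => (1 : G) * z) 1 v = v
  rw [h, mfderiv_id (I := I)]
  rfl

theorem smoothVF_leftInvVF (v : E) : SmoothVF I (M := G) (leftInvVF I v) := by
  intro x₀
  rw [Bundle.contMDiffAt_section]
  have hf : ContMDiffAt (I.prod I) I (⊤ : ℕ∞) (Function.uncurry fun (x z : G) => x * z)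
      (x₀, (1 : G)) := (contMDiff_mul I (⊤ : ℕ∞)).contMDiffAt
  have hg : ContMDiffAt I I (⊤ : ℕ∞) (fun _ : G => (1 : G)) x₀ := contMDiffAt_const
  have hmf := hf.mfderiv (fun x z => x * z) (fun _ => (1 : G)) hg
    (by exact_mod_cast (le_top : (⊤ + 1 : ℕ∞) ≤ ⊤))
  have hmain : ContMDiffAt I 𝓘(ℝ, E) (⊤ : ℕ∞)
      (fun x => (inTangentCoordinates I I (fun _ : G => (1 : G)) (fun x => x * 1)
        (fun x => mfderiv I I (fun z => x * z) 1) x₀ x) v) x₀ :=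
    hmf.clm_apply contMDiffAt_const
  apply hmain.congr_of_eventuallyEq
  filter_upwards [(chartAt H x₀).open_source.mem_nhds (mem_chart_source H x₀)] with x hx
  have hx1 : (fun _ : G => (1 : G)) x ∈ (chartAt H ((1 : G))).source := mem_chart_source H 1
  have hx2 : x * 1 ∈ (chartAt H (x₀ * 1)).source := by simpa [mul_one] using hx
  have hkey := inTangentCoordinates_eq (I := I) (I' := I) (f := fun _ : G => (1 : G))
    (g := fun x => x * 1) (ϕ := fun x => mfderiv I I (fun z => x * z) 1) hx1 hx2
  rw [hkey]
  have hself := (tangentBundleCore I G).coordChange_self (achart H (1 : G)) 1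
    (mem_chart_source H 1) v
  have htriv : (trivializationAt E (TangentSpace I) x₀ ⟨x, leftInvVF I v x⟩).2
      = (tangentBundleCore I G).coordChange (achart H x) (achart H x₀) x
        (leftInvVF I v x) := rfl
  rw [htriv]
  simp only [ContinuousLinearMap.coe_comp', Function.comp_apply, hself, mul_one]
  exact congrArg ((tangentBundleCore I G).coordChange (achart H x) (achart H x₀) x)
    (congrArg (mfderiv I I (fun z => x * z) 1) hself.symm)

/-- The key geometric fact: the bracket (in charts) of a left invariant vector field with a
right invariant one vanishes, by symmetry of second derivatives. -/
theorem lieBracket_leftInv_rightInv {Z Y : ∀ y : G, TangentSpace I y}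
    (hZ : LeftInvariant I Z) (hY : RightInvariant I Y) (x : G) :
    VectorField.lieBracketWithin ℝ (chartVF I x Z) (chartVF I x Y) (range I)
      (extChartAt I x x) = 0 := by
  set c := extChartAt I x with hc
  set p : E := extChartAt I x x with hp
  set s : Set E := range I with hs
  set Q : E × E → E := fun uw => c (c.symm uw.1 * x⁻¹ * c.symm uw.2) with hQdef
  have hpt : p ∈ c.target := mem_extChartAt_target x
  have hts : c.target ⊆ s := extChartAt_target_subset_range x
  have hps : p ∈ s := hts hpt
  have huds : UniqueDiffOn ℝ s := I.uniqueDiffOn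
  have hudp : UniqueDiffWithinAt ℝ s p := huds p hps
  have hudss : UniqueDiffOn ℝ (s ×ˢ s) := huds.prod huds
  have htmem : c.target ∈ nhdsWithin p s := extChartAt_target_mem_nhdsWithin x
  have hsymmp : c.symm p = x := extChartAt_to_inv x
  -- `Q` is smooth at suitable points
  have key : ∀ u ∈ c.target, ∀ w ∈ c.target, c.symm u * x⁻¹ * c.symm w ∈ c.source →
      ContDiffWithinAt ℝ (⊤ : ℕ∞) Q (s ×ˢ s) (u, w) := by
    intro u hu w hw hmem
    have h1 : ContMDiffWithinAt (𝓘(ℝ, E).prod 𝓘(ℝ, E)) (I.prod I) (⊤ : ℕ∞)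
        (fun uw : E × E => ((c.symm uw.1 : G), (c.symm uw.2 : G))) (c.target ×ˢ c.target)
        (u, w) := by
      apply ContMDiffWithinAt.prodMk
      · exact ContMDiffWithinAt.comp (u, w)
          ((contMDiffOn_extChartAt_symm x) u hu) contMDiffWithinAt_fst
          (fun q hq => hq.1)
      · exact ContMDiffWithinAt.comp (u, w)
          ((contMDiffOn_extChartAt_symm x) w hw) contMDiffWithinAt_snd
          (fun q hq => hq.2)
    have h2 : ContMDiffAt (I.prod I) I (⊤ : ℕ∞) (fun ab : G × G => ab.1 * x⁻¹ * ab.2)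
        (c.symm u, c.symm w) := by
      have : ContMDiff (I.prod I) I (⊤ : ℕ∞) (fun ab : G × G => ab.1 * x⁻¹ * ab.2) :=
        (contMDiff_fst.mul contMDiff_const).mul contMDiff_snd
      exact this.contMDiffAt
    have h3 : ContMDiffAt I 𝓘(ℝ, E) (⊤ : ℕ∞) c (c.symm u * x⁻¹ * c.symm w) :=
      contMDiffAt_extChartAt' (by rwa [← extChartAt_source (I := I)])
    have h4 : ContMDiffWithinAt (𝓘(ℝ, E).prod 𝓘(ℝ, E)) 𝓘(ℝ, E) (⊤ : ℕ∞)
        (c ∘ ((fun ab : G × G => ab.1 * x⁻¹ * ab.2) ∘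
          (fun uw : E × E => ((c.symm uw.1 : G), (c.symm uw.2 : G)))))
        (c.target ×ˢ c.target) (u, w) :=
      ContMDiffAt.comp_contMDiffWithinAt (u, w) h3
        (ContMDiffAt.comp_contMDiffWithinAt (u, w) h2 h1)
    have h4' : ContMDiffWithinAt (𝓘(ℝ, E).prod 𝓘(ℝ, E)) 𝓘(ℝ, E) (⊤ : ℕ∞) Q
        (c.target ×ˢ c.target) (u, w) := h4
    rw [← modelWithCornersSelf_prod, chartedSpaceSelf_prod] at h4'
    have h5 : ContDiffWithinAt ℝ (⊤ : ℕ∞) Q (c.target ×ˢ c.target) (u, w) :=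
      contMDiffWithinAt_iff_contDiffWithinAt.mp h4'
    apply h5.mono_of_mem_nhdsWithin
    rw [nhdsWithin_prod_eq]
    exact Filter.prod_mem_prod (extChartAt_target_mem_nhdsWithin_of_mem hu)
      (extChartAt_target_mem_nhdsWithin_of_mem hw)
  have hQup : ∀ u ∈ c.target, ContDiffWithinAt ℝ (⊤ : ℕ∞) Q (s ×ˢ s) (u, p) := by
    intro u hu
    refine key u hu p hpt ?_
    rw [hsymmp, inv_mul_cancel_right]
    exact c.map_target hu
  have hQpu : ∀ u ∈ c.target, ContDiffWithinAt ℝ (⊤ : ℕ∞) Q (s ×ˢ s) (p, u) := by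
    intro u hu
    refine key p hpt u hu ?_
    rw [hsymmp, mul_inv_cancel, one_mul]
    exact c.map_target hu
  -- the chart expression of `Z` in terms of `Q`
  have hZchart : ∀ u ∈ c.target, chartVF I x Z u
      = fderivWithin ℝ (fun w => Q (u, w)) s p (Z x) := by
    intro u hu
    have ha : c.symm u ∈ c.source := c.map_target hu
    have ha' : c.symm u ∈ (chartAt H x).source := by
      rwa [← extChartAt_source (I := I)]
    have hy1 : (fun z => (c.symm u * x⁻¹) * z) x = c.symm u := by
      simp [inv_mul_cancel_right]
    have hZa : Z (c.symm u) = mfderiv I I (fun z => (c.symm u * x⁻¹) * z) x (Z x) := by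
      have h := hZ (c.symm u * x⁻¹) x
      rw [inv_mul_cancel_right] at h
      exact h.symm
    have hdiff : MDifferentiableAt I 𝓘(ℝ, E) (c ∘ fun z => (c.symm u * x⁻¹) * z) x :=
      MDifferentiableAt.comp_of_eq (I' := I) (hg := mdifferentiableAt_extChartAt ha')
        (hf := mdifferentiableAt_mul_left) (hy := hy1)
    calc chartVF I x Z u = show E from mfderiv I 𝓘(ℝ, E) c (c.symm u) (Z (c.symm u)) := rfl
      _ = show E from mfderiv I 𝓘(ℝ, E) c (c.symm u)
            (mfderiv I I (fun z => (c.symm u * x⁻¹) * z) x (Z x)) := by rw [← hZa]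
      _ = show E from mfderiv I 𝓘(ℝ, E) (c ∘ fun z => (c.symm u * x⁻¹) * z) x (Z x) :=
            (mfderiv_comp_apply_of_eq (I := I) (I' := I) (x := x)
              (hg := mdifferentiableAt_extChartAt ha')
              (hf := mdifferentiableAt_mul_left) (hy := hy1) (Z x)).symm
      _ = fderivWithin ℝ ((c ∘ fun z => (c.symm u * x⁻¹) * z) ∘ c.symm) s p (Z x) := by
            rw [mfderiv_eq_fderivWithin_chart I hdiff]
            rfl
      _ = fderivWithin ℝ (fun w => Q (u, w)) s p (Z x) := rfl
  -- the chart expression of `Y` in terms of `Q`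
  have hYchart : ∀ u ∈ c.target, chartVF I x Y u
      = fderivWithin ℝ (fun w => Q (w, u)) s p (Y x) := by
    intro u hu
    have ha : c.symm u ∈ c.source := c.map_target hu
    have ha' : c.symm u ∈ (chartAt H x).source := by
      rwa [← extChartAt_source (I := I)]
    have hy1 : (fun z => z * (x⁻¹ * c.symm u)) x = c.symm u := by
      simp [mul_inv_cancel_left]
    have hYa : Y (c.symm u) = mfderiv I I (fun z => z * (x⁻¹ * c.symm u)) x (Y x) := by
      have h := hY (x⁻¹ * c.symm u) x
      rw [mul_inv_cancel_left] at h
      exact h.symm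
    have hdiff : MDifferentiableAt I 𝓘(ℝ, E) (c ∘ fun z => z * (x⁻¹ * c.symm u)) x :=
      MDifferentiableAt.comp_of_eq (I' := I) (hg := mdifferentiableAt_extChartAt ha')
        (hf := mdifferentiableAt_mul_right) (hy := hy1)
    have hfun : ((c ∘ fun z => z * (x⁻¹ * c.symm u)) ∘ c.symm) = fun w => Q (w, u) := by
      funext w
      show c (c.symm w * (x⁻¹ * c.symm u)) = c (c.symm w * x⁻¹ * c.symm u)
      rw [mul_assoc]
    calc chartVF I x Y u = show E from mfderiv I 𝓘(ℝ, E) c (c.symm u) (Y (c.symm u)) := rfl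
      _ = show E from mfderiv I 𝓘(ℝ, E) c (c.symm u)
            (mfderiv I I (fun z => z * (x⁻¹ * c.symm u)) x (Y x)) := by rw [← hYa]
      _ = show E from mfderiv I 𝓘(ℝ, E) (c ∘ fun z => z * (x⁻¹ * c.symm u)) x (Y x) :=
            (mfderiv_comp_apply_of_eq (I := I) (I' := I) (x := x)
              (hg := mdifferentiableAt_extChartAt ha')
              (hf := mdifferentiableAt_mul_right) (hy := hy1) (Y x)).symm
      _ = fderivWithin ℝ ((c ∘ fun z => z * (x⁻¹ * c.symm u)) ∘ c.symm) s p (Y x) := by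
            rw [mfderiv_eq_fderivWithin_chart I hdiff]
            rfl
      _ = fderivWithin ℝ (fun w => Q (w, u)) s p (Y x) := by rw [hfun]
  -- values at `p`
  have hQp2 : ∀ w ∈ c.target, Q (p, w) = w := by
    intro w hw
    show c (c.symm p * x⁻¹ * c.symm w) = w
    rw [hsymmp, mul_inv_cancel, one_mul]
    exact c.right_inv hw
  have hQp1 : ∀ w ∈ c.target, Q (w, p) = w := by
    intro w hw
    show c (c.symm w * x⁻¹ * c.symm p) = w
    rw [hsymmp, inv_mul_cancel_right]
    exact c.right_inv hw
  have hvp : chartVF I x Z p = Z x := by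
    rw [hZchart p hpt]
    have heq : fderivWithin ℝ (fun w => Q (p, w)) s p = fderivWithin ℝ id s p := by
      apply Filter.EventuallyEq.fderivWithin_eq
      · filter_upwards [htmem] with w hw
        exact hQp2 w hw
      · exact hQp2 p hpt
    rw [heq, fderivWithin_id hudp]
    rfl
  have hwp : chartVF I x Y p = Y x := by
    rw [hYchart p hpt]
    have heq : fderivWithin ℝ (fun w => Q (w, p)) s p = fderivWithin ℝ id s p := by
      apply Filter.EventuallyEq.fderivWithin_eq
      · filter_upwards [htmem] with w hw
        exact hQp1 w hw
      · exact hQp1 p hpt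
    rw [heq, fderivWithin_id hudp]
    rfl
  -- decomposition of the partial derivatives through the full derivative of `Q`
  have hcomp2 : ∀ u ∈ c.target, fderivWithin ℝ (fun w => Q (u, w)) s p =
      (fderivWithin ℝ Q (s ×ˢ s) (u, p)).comp
        ((0 : E →L[ℝ] E).prod (ContinuousLinearMap.id ℝ E)) := by
    intro u hu
    have hdiffQ : DifferentiableWithinAt ℝ Q (s ×ˢ s) (u, p) :=
      (hQup u hu).differentiableWithinAt (by norm_cast)
    have hdi : HasFDerivWithinAt (fun w : E => (u, w))
        ((0 : E →L[ℝ] E).prod (ContinuousLinearMap.id ℝ E)) s p :=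
      (hasFDerivWithinAt_const u p s).prodMk (hasFDerivWithinAt_id p s)
    have hmt : MapsTo (fun w : E => (u, w)) s (s ×ˢ s) := fun w hw => ⟨hts hu, hw⟩
    have h := fderivWithin_comp (𝕜 := ℝ) (f := fun w : E => (u, w)) (g := Q)
      (t := s ×ˢ s) p hdiffQ hdi.differentiableWithinAt hmt hudp
    rw [hdi.fderivWithin hudp] at h
    exact h
  have hcomp1 : ∀ u ∈ c.target, fderivWithin ℝ (fun w => Q (w, u)) s p =
      (fderivWithin ℝ Q (s ×ˢ s) (p, u)).comp
        ((ContinuousLinearMap.id ℝ E).prod (0 : E →L[ℝ] E)) := by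
    intro u hu
    have hdiffQ : DifferentiableWithinAt ℝ Q (s ×ˢ s) (p, u) :=
      (hQpu u hu).differentiableWithinAt (by norm_cast)
    have hdi : HasFDerivWithinAt (fun w : E => (w, u))
        ((ContinuousLinearMap.id ℝ E).prod (0 : E →L[ℝ] E)) s p :=
      (hasFDerivWithinAt_id p s).prodMk (hasFDerivWithinAt_const u p s)
    have hmt : MapsTo (fun w : E => (w, u)) s (s ×ˢ s) := fun w hw => ⟨hw, hts hu⟩
    have h := fderivWithin_comp (𝕜 := ℝ) (f := fun w : E => (w, u)) (g := Q)
      (t := s ×ˢ s) p hdiffQ hdi.differentiableWithinAt hmt hudp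
    rw [hdi.fderivWithin hudp] at h
    exact h
  -- second derivative
  have hQpp : ContDiffWithinAt ℝ (⊤ : ℕ∞) Q (s ×ˢ s) (p, p) := hQup p hpt
  have hmemss : (p, p) ∈ s ×ˢ s := ⟨hps, hps⟩
  have hH1 : DifferentiableWithinAt ℝ (fderivWithin ℝ Q (s ×ˢ s)) (s ×ˢ s) (p, p) := by
    have := hQpp.fderivWithin_right (m := 1) hudss (by norm_cast) hmemss
    exact this.differentiableWithinAt one_ne_zero
  have hsymm : IsSymmSndFDerivWithinAt ℝ Q (s ×ˢ s) (p, p) := by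
    apply hQpp.isSymmSndFDerivWithinAt
      (by rw [minSmoothness_of_isRCLikeNormedField]; exact WithTop.coe_le_coe.mpr (le_top : (2 : ℕ∞) ≤ ⊤)) hudss _ hmemss
    rw [interior_prod_eq, closure_prod_eq]
    exact ⟨I.range_subset_closure_interior hps, I.range_subset_closure_interior hps⟩
  -- derivative of the chart expression of Z at p
  have hZd : fderivWithin ℝ (chartVF I x Z) s p (Y x) =
      fderivWithin ℝ (fderivWithin ℝ Q (s ×ˢ s)) (s ×ˢ s) (p, p) ((Y x, 0) : E × E) (((0 : E), Z x) : E × E) := by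
    have heq : fderivWithin ℝ (chartVF I x Z) s p =
        fderivWithin ℝ (fun u => fderivWithin ℝ Q (s ×ˢ s) (u, p) (((0 : E), Z x) : E × E)) s p := by
      apply Filter.EventuallyEq.fderivWithin_eq
      · filter_upwards [htmem] with u hu
        rw [hZchart u hu, hcomp2 u hu]
        rfl
      · rw [hZchart p hpt, hcomp2 p hpt]
        rfl
    have hjd : HasFDerivWithinAt (fun u : E => (u, p))
        ((ContinuousLinearMap.id ℝ E).prod (0 : E →L[ℝ] E)) s p :=
      (hasFDerivWithinAt_id p s).prodMk (hasFDerivWithinAt_const p p s)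
    have hmt : MapsTo (fun u : E => (u, p)) s (s ×ˢ s) := fun w hw => ⟨hw, hps⟩
    have hCd : DifferentiableWithinAt ℝ
        (fun u => fderivWithin ℝ Q (s ×ˢ s) (u, p)) s p :=
      DifferentiableWithinAt.comp (t := s ×ˢ s) p hH1 hjd.differentiableWithinAt hmt
    have happ := fderivWithin_clm_apply hudp hCd
      (differentiableWithinAt_const (((0 : E), Z x) : E × E))
    have hCder : fderivWithin ℝ (fun u => fderivWithin ℝ Q (s ×ˢ s) (u, p)) s p =
        (fderivWithin ℝ (fderivWithin ℝ Q (s ×ˢ s)) (s ×ˢ s) (p, p)).comp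
          ((ContinuousLinearMap.id ℝ E).prod (0 : E →L[ℝ] E)) := by
      have h := fderivWithin_comp (𝕜 := ℝ) (f := fun u : E => (u, p))
        (g := fderivWithin ℝ Q (s ×ˢ s)) (t := s ×ˢ s) p hH1
        hjd.differentiableWithinAt hmt hudp
      rw [hjd.fderivWithin hudp] at h
      exact h
    rw [heq, happ, hCder, fderivWithin_const_apply _]
    simp
    rfl
  -- derivative of the chart expression of Y at p
  have hYd : fderivWithin ℝ (chartVF I x Y) s p (Z x) =
      fderivWithin ℝ (fderivWithin ℝ Q (s ×ˢ s)) (s ×ˢ s) (p, p) (((0 : E), Z x) : E × E) ((Y x, 0) : E × E) := by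
    have heq : fderivWithin ℝ (chartVF I x Y) s p =
        fderivWithin ℝ (fun u => fderivWithin ℝ Q (s ×ˢ s) (p, u) ((Y x, (0 : E)) : E × E)) s p := by
      apply Filter.EventuallyEq.fderivWithin_eq
      · filter_upwards [htmem] with u hu
        rw [hYchart u hu, hcomp1 u hu]
        rfl
      · rw [hYchart p hpt, hcomp1 p hpt]
        rfl
    have hjd : HasFDerivWithinAt (fun u : E => (p, u))
        ((0 : E →L[ℝ] E).prod (ContinuousLinearMap.id ℝ E)) s p :=
      (hasFDerivWithinAt_const p p s).prodMk (hasFDerivWithinAt_id p s)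
    have hmt : MapsTo (fun u : E => (p, u)) s (s ×ˢ s) := fun w hw => ⟨hps, hw⟩
    have hCd : DifferentiableWithinAt ℝ
        (fun u => fderivWithin ℝ Q (s ×ˢ s) (p, u)) s p :=
      DifferentiableWithinAt.comp (t := s ×ˢ s) p hH1 hjd.differentiableWithinAt hmt
    have happ := fderivWithin_clm_apply hudp hCd
      (differentiableWithinAt_const (((Y x), (0 : E)) : E × E))
    have hCder : fderivWithin ℝ (fun u => fderivWithin ℝ Q (s ×ˢ s) (p, u)) s p =
        (fderivWithin ℝ (fderivWithin ℝ Q (s ×ˢ s)) (s ×ˢ s) (p, p)).comp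
          ((0 : E →L[ℝ] E).prod (ContinuousLinearMap.id ℝ E)) := by
      have h := fderivWithin_comp (𝕜 := ℝ) (f := fun u : E => (p, u))
        (g := fderivWithin ℝ Q (s ×ˢ s)) (t := s ×ˢ s) p hH1
        hjd.differentiableWithinAt hmt hudp
      rw [hjd.fderivWithin hudp] at h
      exact h
    rw [heq, happ, hCder, fderivWithin_const_apply _]
    simp
    rfl
  show fderivWithin ℝ (chartVF I x Y) s p (chartVF I x Z p)
      - fderivWithin ℝ (chartVF I x Z) s p (chartVF I x Y p) = 0
  rw [hvp, hwp, hZd, hYd, hsymm (((0 : E), Z x) : E × E) ((Y x, 0) : E × E), sub_self]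

end GroupAux

/-- On a connected Lie group, every affine vector field decomposes
uniquely as the sum of a linear vector field and a left invariant one. -/
theorem affine_unique_decomposition [ConnectedSpace G]
    (F : ∀ y : G, TangentSpace I y) (hF : IsAffineVF I F) :
    ∃! p : (∀ y : G, TangentSpace I y) × (∀ y : G, TangentSpace I y),
      IsLinearVF I p.1 ∧ LeftInvariant I p.2 ∧ F = fun x => p.1 x + p.2 x := by
  classical
  have hZleft : LeftInvariant I (G := G) (leftInvVF I (F 1)) := leftInvariant_leftInvVF I (F 1)
  have hZsmooth : SmoothVF I (M := G) (leftInvVF I (F 1)) := smoothVF_leftInvVF I (F 1)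
  have hZ1 : leftInvVF I (F 1) (1 : G) = F 1 := leftInvVF_one I (F 1)
  have hXsmooth : SmoothVF I (fun y : G => F y - leftInvVF I (F 1) y) :=
    CkVF.sub I hF.1 hZsmooth
  have hchart : ∀ y : G, chartVF I y (fun z => F z - leftInvVF I (F 1) z)
      = fun v => chartVF I y F v - chartVF I y (leftInvVF I (F 1)) v := by
    intro y
    funext v
    show mfderiv I 𝓘(ℝ, E) (extChartAt I y) ((extChartAt I y).symm v)
        (F ((extChartAt I y).symm v) - leftInvVF I (F 1) ((extChartAt I y).symm v))
      = _
    exact ContinuousLinearMap.map_sub _ _ _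
  have hbra : ∀ Y' : ∀ y : G, TangentSpace I y, RightInvariant I Y' →
      mbracket I (fun z => F z - leftInvVF I (F 1) z) Y' = mbracket I F Y' := by
    intro Y' hY'
    funext y
    have hud : UniqueDiffWithinAt ℝ (range I) (extChartAt I y y) :=
      I.uniqueDiffOn _ (extChartAt_target_subset_range y (mem_extChartAt_target y))
    have hdF : DifferentiableWithinAt ℝ (chartVF I y F) (range I) (extChartAt I y y) :=
      (CkVF.contDiffWithinAt_chartVF I hF.1 y).differentiableWithinAt (by norm_cast)
    have hdZ : DifferentiableWithinAt ℝ (chartVF I y (leftInvVF I (F 1))) (range I)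
        (extChartAt I y y) :=
      (CkVF.contDiffWithinAt_chartVF I hZsmooth y).differentiableWithinAt (by norm_cast)
    have hLB : VectorField.lieBracketWithin ℝ
          (chartVF I y (fun z => F z - leftInvVF I (F 1) z)) (chartVF I y Y') (range I)
          (extChartAt I y y)
        = VectorField.lieBracketWithin ℝ (chartVF I y F) (chartVF I y Y') (range I)
            (extChartAt I y y)
          - VectorField.lieBracketWithin ℝ (chartVF I y (leftInvVF I (F 1)))
              (chartVF I y Y') (range I) (extChartAt I y y) := by
      rw [hchart y]
      simp only [VectorField.lieBracketWithin]
      rw [fderivWithin_fun_sub hud hdF hdZ]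
      simp only [map_sub, ContinuousLinearMap.sub_apply]
      abel
    show mfderiv 𝓘(ℝ, E) I (extChartAt I y).symm (extChartAt I y y)
        (show E from VectorField.lieBracketWithin ℝ
          (chartVF I y (fun z => F z - leftInvVF I (F 1) z)) (chartVF I y Y') (range I)
          (extChartAt I y y))
      = mbracket I F Y' y
    rw [hLB, lieBracket_leftInv_rightInv I hZleft hY' y, sub_zero]
    rfl
  refine ⟨(fun y => F y - leftInvVF I (F 1) y, leftInvVF I (F 1)), ⟨⟨⟨hXsmooth, ?_⟩, ?_⟩,
    hZleft, ?_⟩, ?_⟩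
  · intro Y' hY'
    rw [hbra Y' hY']
    exact hF.2 Y' hY'
  · show F 1 - leftInvVF I (F 1) 1 = 0
    rw [hZ1, sub_self]
  · funext y
    show F y = F y - leftInvVF I (F 1) y + leftInvVF I (F 1) y
    rw [sub_add_cancel]
  · rintro ⟨X', Z'⟩ ⟨hX'lin, hZ'left, hsum⟩
    dsimp only at hX'lin hZ'left hsum
    have hZ'1 : Z' 1 = F 1 := by
      have h := congrFun hsum 1
      rw [hX'lin.2, zero_add] at h
      exact h.symm
    have hZeq : Z' = leftInvVF I (F 1) := by
      funext y
      have h1 := hZ'left y 1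
      rw [mul_one] at h1
      show Z' y = mfderiv I I (fun z => y * z) 1 (F 1)
      rw [← hZ'1]
      exact h1.symm
    have hXeq : X' = fun y : G => F y - leftInvVF I (F 1) y := by
      funext y
      have h := congrFun hsum y
      rw [← hZeq]
      show X' y = F y - Z' y
      rw [h]
      abel
    rw [Prod.ext_iff]
    exact ⟨hXeq, hZeq⟩


end LieGroupDefs
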